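/- Four points chosen independently and uniformly on the circle, paired into two pairs (the first two points forming one pair and the last two the other), determine two chords; the probability that the two chords intersect is 1/3. -/

import Mathlib

open MeasureTheory Real Set

/-- The uniform probability measure on the interval `[a,b]`. -/
noncomputable def unif (a b : ℝ) : Measure ℝ :=
  (ENNReal.ofReal (b - a))⁻¹ • volume.restrict (Icc a b)

/-- Reduction of a real number modulo 2π, with values in `[0, 2π)`. -/
noncomputable def mod2pi (x : ℝ) : ℝ := x - 2 * π * ⌊x / (2 * π)⌋

/-- The point with argument `c` lies on the open arc travelled counterclockwise
    from argument `a` to argument `b`. -/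
noncomputable def onArc (a b c : ℝ) : Prop := mod2pi (c - a) < mod2pi (b - a)

/-- The chords of the unit circle joining e^{iz₁} to e^{iz₂} and e^{iw₁} to e^{iw₂}
    cross, i.e. the two pairs interleave in the cyclic order: exactly one of
    w₁, w₂ lies on the arc from z₁ to z₂. -/
noncomputable def chordsCross (z₁ z₂ w₁ w₂ : ℝ) : Prop :=
  onArc z₁ z₂ w₁ ≠ onArc z₁ z₂ w₂

lemma tp_pos : (0:ℝ) < 2 * π := by positivity

lemma mod2pi_eq_fract (x : ℝ) : mod2pi x = 2 * π * Int.fract (x / (2 * π)) := by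
  unfold mod2pi Int.fract
  have := tp_pos.ne'
  field_simp

lemma mod2pi_mem (x : ℝ) : mod2pi x ∈ Ico 0 (2 * π) := by
  rw [mod2pi_eq_fract]
  constructor
  · exact mul_nonneg tp_pos.le (Int.fract_nonneg _)
  · calc 2 * π * Int.fract (x / (2*π)) < 2 * π * 1 :=
        (mul_lt_mul_iff_right₀ tp_pos).2 (Int.fract_lt_one _)
    _ = 2 * π := mul_one _

lemma mod2pi_eq_self {x : ℝ} (hx : x ∈ Ico 0 (2 * π)) : mod2pi x = x := by
  rw [mod2pi_eq_fract, Int.fract_eq_self.2 ⟨div_nonneg hx.1 tp_pos.le,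
    (div_lt_one tp_pos).2 hx.2⟩]
  field_simp

lemma mod2pi_add (x : ℝ) : mod2pi (x + 2 * π) = mod2pi x := by
  rw [mod2pi_eq_fract, mod2pi_eq_fract]
  have : (x + 2 * π) / (2 * π) = x / (2 * π) + 1 := by field_simp
  rw [this, Int.fract_add_one]

lemma mod2pi_neg_mem {x : ℝ} (hx : x ∈ Ico (-(2*π)) 0) : mod2pi x = x + 2 * π := by
  rw [← mod2pi_add, mod2pi_eq_self ⟨by linarith [hx.1], by linarith [hx.2]⟩]

lemma measurable_mod2pi : Measurable mod2pi := by
  unfold mod2pi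
  have h : Measurable fun x : ℝ => ((⌊x / (2*π)⌋ : ℤ) : ℝ) :=
    Measurable.comp Measurable.of_discrete (measurable_id.div_const _).floor
  exact measurable_id.sub (h.const_mul _)

lemma unif_apply (s : Set ℝ) :
    unif 0 (2*π) s = (ENNReal.ofReal (2*π))⁻¹ * volume (s ∩ Icc 0 (2*π)) := by
  simp only [unif, sub_zero, Measure.smul_apply, Measure.restrict_apply' measurableSet_Icc, smul_eq_mul]

lemma tp_ne_zero : ENNReal.ofReal (2*π) ≠ 0 := by
  exact (ENNReal.ofReal_pos.2 tp_pos).ne'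

instance : IsProbabilityMeasure (unif 0 (2*π)) := by
  constructor
  rw [unif_apply, univ_inter, Real.volume_Icc]
  rw [show (2*π - 0 : ℝ) = 2*π by ring]
  exact ENNReal.inv_mul_cancel tp_ne_zero ENNReal.ofReal_ne_top

lemma measurableSet_onArc (a b : ℝ) : MeasurableSet {w : ℝ | onArc a b w} := by
  unfold onArc
  exact measurableSet_lt (measurable_mod2pi.comp (measurable_id.sub_const a))
    measurable_const

lemma arc_inter {a : ℝ} (ha : a ∈ Ico 0 (2*π)) (b : ℝ) :
    {w : ℝ | onArc a b w} ∩ Ico 0 (2*π) =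
      Ico a (min (a + mod2pi (b-a)) (2*π)) ∪ Ico 0 (a + mod2pi (b-a) - 2*π) := by
  set L := mod2pi (b - a) with hLdef
  have hL := mod2pi_mem (b - a)
  ext w
  simp only [mem_inter_iff, mem_setOf_eq, mem_union, mem_Ico, lt_min_iff]
  constructor
  · rintro ⟨harc, hw0, hw2⟩
    unfold onArc at harc
    rw [← hLdef] at harc
    rcases le_or_gt a w with hwa | hwa
    · left
      rw [mod2pi_eq_self ⟨by linarith, by linarith [ha.1]⟩] at harc
      exact ⟨hwa, by linarith, hw2⟩
    · right
      rw [mod2pi_neg_mem ⟨by linarith [ha.2], by linarith⟩] at harc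
      exact ⟨hw0, by linarith⟩
  · rintro (⟨h1, h2, h3⟩ | ⟨h1, h2⟩)
    · refine ⟨?_, by linarith [ha.1], h3⟩
      unfold onArc
      rw [← hLdef, mod2pi_eq_self ⟨by linarith, by linarith [ha.1]⟩]
      linarith
    · have hwa : w < a := by linarith [hL.2]
      refine ⟨?_, h1, by linarith [ha.2]⟩
      unfold onArc
      rw [← hLdef, mod2pi_neg_mem ⟨by linarith [ha.2], by linarith⟩]
      linarith

lemma volume_arc {a : ℝ} (ha : a ∈ Ico 0 (2*π)) (b : ℝ) :
    volume ({w : ℝ | onArc a b w} ∩ Icc 0 (2*π)) = ENNReal.ofReal (mod2pi (b - a)) := by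
  set L := mod2pi (b - a) with hLdef
  have hL := mod2pi_mem (b - a)
  have key : volume ({w : ℝ | onArc a b w} ∩ Ico 0 (2*π)) = ENNReal.ofReal L := by
    rw [arc_inter ha b, ← hLdef]
    rcases le_or_gt (a + L) (2*π) with h | h
    · rw [min_eq_left h, Ico_eq_empty (show ¬(0:ℝ) < a + L - 2*π by push_neg; linarith), union_empty, Real.volume_Ico]
      congr 1; ring
    · rw [min_eq_right h.le,
        measure_union (by
          rw [Set.disjoint_left]
          rintro x ⟨hx1, _⟩ ⟨_, hx2⟩
          linarith [hL.2]) measurableSet_Ico,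
        Real.volume_Ico, Real.volume_Ico,
        ← ENNReal.ofReal_add (by linarith [ha.2]) (by linarith)]
      congr 1; ring
  apply le_antisymm
  · calc volume ({w : ℝ | onArc a b w} ∩ Icc 0 (2*π))
        ≤ volume (({w : ℝ | onArc a b w} ∩ Ico 0 (2*π)) ∪ {2*π}) := by
          apply measure_mono
          rintro x ⟨hx1, hx2, hx3⟩
          rcases lt_or_eq_of_le hx3 with h | h
          · exact Or.inl ⟨hx1, hx2, h⟩
          · exact Or.inr h
    _ ≤ volume ({w : ℝ | onArc a b w} ∩ Ico 0 (2*π)) + volume ({2*π} : Set ℝ) :=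
          measure_union_le _ _
    _ = ENNReal.ofReal L := by rw [key, Real.volume_singleton, add_zero]
  · rw [← key]
    exact measure_mono (inter_subset_inter_right _ Ico_subset_Icc_self)

lemma unif_arc {a : ℝ} (ha : a ∈ Ico 0 (2*π)) (b : ℝ) :
    unif 0 (2*π) {w : ℝ | onArc a b w} = ENNReal.ofReal (mod2pi (b - a) / (2*π)) := by
  rw [unif_apply, volume_arc ha b, ENNReal.ofReal_div_of_pos tp_pos,
    div_eq_mul_inv, mul_comm]

lemma unif_arc_compl {a : ℝ} (ha : a ∈ Ico 0 (2*π)) (b : ℝ) :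
    unif 0 (2*π) {w : ℝ | onArc a b w}ᶜ = ENNReal.ofReal (1 - mod2pi (b - a) / (2*π)) := by
  have hL := mod2pi_mem (b - a)
  have ht1 : mod2pi (b - a) / (2*π) ≤ 1 := by
    rw [div_le_one tp_pos]; exact hL.2.le
  rw [measure_compl (measurableSet_onArc a b) (measure_ne_top _ _), measure_univ,
    unif_arc ha b, ENNReal.ofReal_sub _ (div_nonneg hL.1 tp_pos.le), ENNReal.ofReal_one]

noncomputable def q (t : ℝ) : ℝ :=
  t/(2*π) * (1 - t/(2*π)) + t/(2*π) * (1 - t/(2*π))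

lemma cross_measure {a : ℝ} (ha : a ∈ Ico 0 (2*π)) (b : ℝ) :
    (unif 0 (2*π)).prod (unif 0 (2*π)) {p : ℝ × ℝ | chordsCross a b p.1 p.2} =
      ENNReal.ofReal (q (mod2pi (b - a))) := by
  have hA := measurableSet_onArc a b
  have hL := mod2pi_mem (b - a)
  have seteq : {p : ℝ × ℝ | chordsCross a b p.1 p.2} =
      ({w : ℝ | onArc a b w} ×ˢ {w : ℝ | onArc a b w}ᶜ) ∪
      ({w : ℝ | onArc a b w}ᶜ ×ˢ {w : ℝ | onArc a b w}) := by
    ext ⟨w1, w2⟩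
    simp only [mem_setOf_eq, mem_union, mem_prod, mem_compl_iff, chordsCross]
    by_cases h1 : onArc a b w1 <;> by_cases h2 : onArc a b w2 <;> simp [h1, h2]
  rw [seteq, measure_union (by
      rw [Set.disjoint_left]
      rintro ⟨x, y⟩ ⟨hx, _⟩ ⟨hx', _⟩
      exact hx' hx) (hA.compl.prod hA),
    Measure.prod_prod, Measure.prod_prod, unif_arc ha b, unif_arc_compl ha b]
  set t := mod2pi (b - a) / (2*π) with htdef
  have ht0 : 0 ≤ t := div_nonneg hL.1 tp_pos.le
  have ht1 : t ≤ 1 := by rw [htdef, div_le_one tp_pos]; exact hL.2.le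
  rw [← ENNReal.ofReal_mul ht0, ← ENNReal.ofReal_mul (by linarith),
    ← ENNReal.ofReal_add (by nlinarith) (by nlinarith)]
  unfold q
  rw [← htdef]
  ring_nf

lemma q_mod2pi_mem (x : ℝ) : 0 ≤ q (mod2pi x) ∧ q (mod2pi x) ≤ 2 := by
  have hL := mod2pi_mem x
  have ht0 : 0 ≤ mod2pi x / (2*π) := div_nonneg hL.1 tp_pos.le
  have ht1 : mod2pi x / (2*π) ≤ 1 := by rw [div_le_one tp_pos]; exact hL.2.le
  unfold q
  constructor <;> nlinarith

lemma q_continuous : Continuous q := by unfold q; fun_prop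

lemma q_mod {x : ℝ} (hx : x ∈ Icc 0 (2*π)) : q (mod2pi x) = q x := by
  rcases lt_or_eq_of_le hx.2 with h | h
  · rw [mod2pi_eq_self ⟨hx.1, h⟩]
  · subst h
    have h1 : mod2pi (2*π) = 0 := by
      have := mod2pi_add 0
      rw [zero_add, mod2pi_eq_self ⟨le_refl 0, tp_pos⟩] at this
      exact this
    rw [h1]
    unfold q
    rw [div_self tp_pos.ne', zero_div]
    ring

lemma middle {a : ℝ} (ha : a ∈ Ico 0 (2*π)) :
    ∫⁻ b, ENNReal.ofReal (q (mod2pi (b - a))) ∂(unif 0 (2*π)) = 1/3 := by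
  have hmeas : Measurable fun b : ℝ => q (mod2pi (b - a)) :=
    q_continuous.measurable.comp (measurable_mod2pi.comp (measurable_id.sub_const a))
  have hint : Integrable (fun b : ℝ => q (mod2pi (b - a)))
      (volume.restrict (Icc 0 (2*π))) := by
    apply Integrable.mono' (integrable_const (2:ℝ)) hmeas.aestronglyMeasurable
    filter_upwards with x
    rw [Real.norm_eq_abs, abs_of_nonneg (q_mod2pi_mem _).1]
    exact (q_mod2pi_mem _).2
  have hnn : 0 ≤ᵐ[volume.restrict (Icc 0 (2*π))] fun b : ℝ => q (mod2pi (b - a)) := by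
    filter_upwards with x
    exact (q_mod2pi_mem _).1
  have key : ∫ b in Icc 0 (2*π), q (mod2pi (b - a)) = 2*π/3 := by
    rw [MeasureTheory.integral_Icc_eq_integral_Ioc,
      ← intervalIntegral.integral_of_le tp_pos.le]
    have hper : Function.Periodic (fun b : ℝ => q (mod2pi (b - a))) (2*π) := by
      intro x
      simp only []
      rw [show x + 2*π - a = (x - a) + 2*π by ring, mod2pi_add]
    have h1 := hper.intervalIntegral_add_eq 0 a
    rw [zero_add] at h1
    rw [h1]
    have h2 := intervalIntegral.integral_comp_sub_right (fun x => q (mod2pi x)) a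
      (a := a) (b := a + 2*π)
    simp only [sub_self, add_sub_cancel_left] at h2
    rw [h2]
    have h3 : ∫ x in (0:ℝ)..(2*π), q (mod2pi x) = ∫ x in (0:ℝ)..(2*π), q x := by
      apply intervalIntegral.integral_congr
      intro x hx
      rw [uIcc_of_le tp_pos.le] at hx
      exact q_mod hx
    rw [h3]
    have h4 : ∫ x in (0:ℝ)..(2*π), q x =
        ∫ x in (0:ℝ)..(2*π), ((2/(2*π)) * x - (2/(2*π)^2) * x^2) := by
      apply intervalIntegral.integral_congr
      intro x _
      unfold q
      field_simp
      ring
    rw [h4, intervalIntegral.integral_sub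
        ((by fun_prop : Continuous fun x : ℝ => (2/(2*π)) * x).intervalIntegrable _ _)
        ((by fun_prop : Continuous fun x : ℝ => (2/(2*π)^2) * x^2).intervalIntegrable _ _),
      intervalIntegral.integral_const_mul, intervalIntegral.integral_const_mul,
      integral_id, integral_pow]
    have hpi := pi_pos.ne'
    field_simp
    ring
  calc ∫⁻ b, ENNReal.ofReal (q (mod2pi (b - a))) ∂(unif 0 (2*π))
      = (ENNReal.ofReal (2*π))⁻¹ *
        ∫⁻ b in Icc 0 (2*π), ENNReal.ofReal (q (mod2pi (b - a))) := by
        simp only [unif, sub_zero, lintegral_smul_measure, smul_eq_mul]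
    _ = (ENNReal.ofReal (2*π))⁻¹ * ENNReal.ofReal (2*π/3) := by
        rw [← ofReal_integral_eq_lintegral_ofReal hint hnn, key]
    _ = ENNReal.ofReal (1/3) := by
        rw [show (2*π/3 : ℝ) = 2*π * (1/3) by ring, ENNReal.ofReal_mul tp_pos.le,
          ← mul_assoc, ENNReal.inv_mul_cancel tp_ne_zero ENNReal.ofReal_ne_top, one_mul]
    _ = 1/3 := by
        rw [ENNReal.ofReal_div_of_pos (by norm_num), ENNReal.ofReal_one,
          ENNReal.ofReal_ofNat]

lemma measurableSet_S : MeasurableSet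
    {p : ℝ × ℝ × ℝ × ℝ | chordsCross p.1 p.2.1 p.2.2.1 p.2.2.2} := by
  have hm : ∀ f g : ℝ × ℝ × ℝ × ℝ → ℝ, Measurable f → Measurable g →
      MeasurableSet {p : ℝ × ℝ × ℝ × ℝ | mod2pi (f p) < mod2pi (g p)} :=
    fun f g hf hg => measurableSet_lt (measurable_mod2pi.comp hf) (measurable_mod2pi.comp hg)
  have h1 := hm (fun p => p.2.2.1 - p.1) (fun p => p.2.1 - p.1)
    (measurable_snd.snd.fst.sub measurable_fst) (measurable_snd.fst.sub measurable_fst)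
  have h2 := hm (fun p => p.2.2.2 - p.1) (fun p => p.2.1 - p.1)
    (measurable_snd.snd.snd.sub measurable_fst) (measurable_snd.fst.sub measurable_fst)
  have seteq : {p : ℝ × ℝ × ℝ × ℝ | chordsCross p.1 p.2.1 p.2.2.1 p.2.2.2} =
      ({p : ℝ × ℝ × ℝ × ℝ | mod2pi (p.2.2.1 - p.1) < mod2pi (p.2.1 - p.1)} ∩
       {p : ℝ × ℝ × ℝ × ℝ | mod2pi (p.2.2.2 - p.1) < mod2pi (p.2.1 - p.1)}ᶜ) ∪
      ({p : ℝ × ℝ × ℝ × ℝ | mod2pi (p.2.2.1 - p.1) < mod2pi (p.2.1 - p.1)}ᶜ ∩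
       {p : ℝ × ℝ × ℝ × ℝ | mod2pi (p.2.2.2 - p.1) < mod2pi (p.2.1 - p.1)}) := by
    ext p
    simp only [mem_setOf_eq, mem_union, mem_inter_iff, mem_compl_iff, chordsCross, onArc]
    tauto
  rw [seteq]
  exact (h1.inter h2.compl).union (h1.compl.inter h2)

/-- For four independent uniform points on the circle, paired into two pairs,
    the probability that the two chords intersect is 1/3. -/
theorem chords_cross_probability :
    ((unif 0 (2 * π)).prod ((unif 0 (2 * π)).prod
        ((unif 0 (2 * π)).prod (unif 0 (2 * π)))))
      {p : ℝ × ℝ × ℝ × ℝ | chordsCross p.1 p.2.1 p.2.2.1 p.2.2.2} = 1 / 3 := by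
  set μ := unif 0 (2 * π) with hμ
  set S := {p : ℝ × ℝ × ℝ × ℝ | chordsCross p.1 p.2.1 p.2.2.1 p.2.2.2} with hSdef
  have hS : MeasurableSet S := measurableSet_S
  rw [Measure.prod_apply hS]
  have step : ∀ a ∈ Ico 0 (2*π), (μ.prod (μ.prod μ)) (Prod.mk a ⁻¹' S) = 1/3 := by
    intro a ha
    have hSa : MeasurableSet (Prod.mk a ⁻¹' S) := hS.preimage measurable_prodMk_left
    rw [Measure.prod_apply hSa]
    have inner : ∀ b : ℝ, (μ.prod μ) (Prod.mk b ⁻¹' (Prod.mk a ⁻¹' S)) =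
        ENNReal.ofReal (q (mod2pi (b - a))) := by
      intro b
      have he : Prod.mk b ⁻¹' (Prod.mk a ⁻¹' S) = {p : ℝ × ℝ | chordsCross a b p.1 p.2} := rfl
      rw [he, hμ, cross_measure ha b]
    simp only [inner]
    exact middle ha
  have hae : ∀ᵐ a ∂μ, a ∈ Ico 0 (2*π) := by
    rw [ae_iff]
    have hsub : {a : ℝ | ¬ a ∈ Ico 0 (2*π)} ∩ Icc 0 (2*π) ⊆ {2*π} := by
      rintro x ⟨hx1, hx2, hx3⟩
      simp only [mem_Ico, not_and, not_lt, mem_setOf_eq] at hx1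
      simp only [mem_singleton_iff]
      linarith [hx1 hx2]
    rw [hμ, unif_apply, measure_mono_null hsub Real.volume_singleton, mul_zero]
  calc ∫⁻ a, (μ.prod (μ.prod μ)) (Prod.mk a ⁻¹' S) ∂μ
      = ∫⁻ _, 1/3 ∂μ := lintegral_congr_ae (hae.mono fun a ha => step a ha)
    _ = 1/3 := by simp [lintegral_const, measure_univ]
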